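/- Let E be a pseudo effect algebra satisfying σ-(RDP). If m is a σ-additive Jordan signed measure on E, then m⁺, m⁻, and |m| are σ-additive. -/
import Mathlib


/-- A pseudo effect algebra: a partial algebra `(E; +, 0, 1)` where the partial
addition is encoded as `padd : E → E → Option E` (`padd a b = some c` means
`a + b` is defined and equals `c`). -/
class PseudoEffectAlgebra (E : Type) where
  padd : E → E → Option E
  pzero : E
  pone : E
  /-- (i) `a+b` and `(a+b)+c` exist iff `b+c` and `a+(b+c)` exist ... -/
  assoc_defined : ∀ a b c : E,
    (∃ x, padd a b = some x ∧ (padd x c).isSome) ↔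
      (∃ y, padd b c = some y ∧ (padd a y).isSome)
  /-- ... and in this case `(a+b)+c = a+(b+c)`. -/
  assoc_eq : ∀ a b c x y : E, padd a b = some x → padd b c = some y →
    padd x c = padd a y
  /-- (ii) there is exactly one `d` with `a + d = 1`. -/
  exists_unique_right : ∀ a : E, ∃! d, padd a d = some pone
  /-- (ii) there is exactly one `e` with `e + a = 1`. -/
  exists_unique_left : ∀ a : E, ∃! e, padd e a = some pone
  /-- (iii) if `a+b` exists, there are `d, e` with `a+b = d+a = b+e`. -/
  shift : ∀ a b c : E, padd a b = some c →
    ∃ d e, padd d a = some c ∧ padd b e = some c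
  /-- (iv) if `1+a` exists then `a = 0`. -/
  one_add : ∀ a : E, (padd pone a).isSome → a = pzero
  /-- (iv) if `a+1` exists then `a = 0`. -/
  add_one : ∀ a : E, (padd a pone).isSome → a = pzero

namespace PseudoEffectAlgebra

variable {E : Type} [PseudoEffectAlgebra E]

/-- The induced partial order: `a ≤ b` iff `b = a + c` for some `c ∈ E`. -/
def pLe (a b : E) : Prop := ∃ c, padd a c = some b

/-- The Riesz Decomposition Property (RDP). -/
def RDP (E : Type) [PseudoEffectAlgebra E] : Prop :=
  ∀ a₁ a₂ b₁ b₂ c : E, padd a₁ a₂ = some c → padd b₁ b₂ = some c →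
    ∃ d₁ d₂ d₃ d₄ : E, padd d₁ d₂ = some a₁ ∧ padd d₃ d₄ = some a₂ ∧
      padd d₁ d₃ = some b₁ ∧ padd d₂ d₄ = some b₂

/-- A signed measure on `E`. -/
def IsSignedMeasure (m : E → ℝ) : Prop :=
  ∀ a b c : E, padd a b = some c → m c = m a + m b

/-- A (positive) measure on `E`. -/
def IsMeasure (m : E → ℝ) : Prop :=
  IsSignedMeasure m ∧ ∀ a : E, 0 ≤ m a

/-- A state on `E`. -/
def IsState (s : E → ℝ) : Prop := IsMeasure s ∧ s pone = 1

/-- A Jordan signed measure: a difference of two measures. -/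
def IsJordan (m : E → ℝ) : Prop :=
  ∃ m₁ m₂ : E → ℝ, IsMeasure m₁ ∧ IsMeasure m₂ ∧ m = m₁ - m₂

/-- `m ≤⁺ m'` iff `m' - m` is a (positive) measure. -/
def MLe (m m' : E → ℝ) : Prop := IsMeasure (m' - m)

/-- The (partial) sum `x₁ + ⋯ + xₙ` of a nonempty list of elements of `E`. -/
def lsum : List E → Option E
  | [] => some pzero
  | [a] => some a
  | a :: b :: l => (lsum (b :: l)).bind (fun s => padd a s)

/-- `m` is the supremum, in the po-group `J(E)` of Jordan signed measures ordered
by `≤⁺`, of the set `S`. -/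
def IsSupIn (S : Set (E → ℝ)) (m : E → ℝ) : Prop :=
  IsJordan m ∧ (∀ t ∈ S, MLe t m) ∧
    ∀ h : E → ℝ, IsJordan h → (∀ t ∈ S, MLe t h) → MLe m h

/-- `m` is the infimum, in the po-group `J(E)` of Jordan signed measures ordered
by `≤⁺`, of the set `S`. -/
def IsInfIn (S : Set (E → ℝ)) (m : E → ℝ) : Prop :=
  IsJordan m ∧ (∀ t ∈ S, MLe m t) ∧
    ∀ h : E → ℝ, IsJordan h → (∀ t ∈ S, MLe h t) → MLe h m

/-- `b` is the least upper bound (in the order of `E`) of the set `S ⊆ E`. -/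
def IsLubE (S : Set E) (b : E) : Prop :=
  (∀ a ∈ S, pLe a b) ∧ ∀ c : E, (∀ a ∈ S, pLe a c) → pLe b c

/-- A σ-additive signed measure: if `a₁ ≤ a₂ ≤ ⋯` and `a = ⋁ₙ aₙ` exists in `E`,
then `m(a) = limₙ m(aₙ)`. -/
def SigmaAdditive (m : E → ℝ) : Prop :=
  ∀ (a : ℕ → E) (b : E), (∀ n, pLe (a n) (a (n + 1))) → IsLubE (Set.range a) b →
    Filter.Tendsto (fun n => m (a n)) Filter.atTop (nhds (m b))

/-- `s = Σₙ aₙ`: all partial sums `bₙ = a₀ + ⋯ + aₙ` exist and `s = ⋁ₙ bₙ`. -/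
def HasSumE (a : ℕ → E) (s : E) : Prop :=
  ∃ b : ℕ → E, b 0 = a 0 ∧ (∀ n, padd (b n) (a (n + 1)) = some (b (n + 1))) ∧
    IsLubE (Set.range b) s

/-- `E` satisfies σ-(RDP): if `a₁ + a₂ = Σₙ bₙ`, then there are sequences
`(c₁ₙ)`, `(c₂ₙ)` with `aᵢ = Σₙ cᵢₙ` and `bₙ = c₁ₙ + c₂ₙ` for all `n`. -/
def SigmaRDP (E : Type) [PseudoEffectAlgebra E] : Prop :=
  ∀ (a₁ a₂ x : E) (b : ℕ → E), padd a₁ a₂ = some x → HasSumE b x →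
    ∃ c₁ c₂ : ℕ → E, HasSumE c₁ a₁ ∧ HasSumE c₂ a₂ ∧
      ∀ n, padd (c₁ n) (c₂ n) = some (b n)

/-! ### Auxiliary lemmas -/

section Aux

lemma one_padd_zero : padd (pone : E) pzero = some pone := by
  obtain ⟨d, hd, -⟩ := exists_unique_right (pone : E)
  have hd0 : d = pzero := one_add d (by rw [hd]; rfl)
  rwa [hd0] at hd

lemma zero_padd_one : padd (pzero : E) pone = some pone := by
  obtain ⟨e, he, -⟩ := exists_unique_left (pone : E)
  have he0 : e = pzero := add_one e (by rw [he]; rfl)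
  rwa [he0] at he

/-- Associativity, existence transferred left-to-right. -/
lemma assoc_ex1 {a b c x w : E} (h1 : padd a b = some x) (h2 : padd x c = some w) :
    ∃ y, padd b c = some y ∧ padd a y = some w := by
  obtain ⟨y, hy, -⟩ := (assoc_defined a b c).1 ⟨x, h1, by rw [h2]; rfl⟩
  refine ⟨y, hy, ?_⟩
  rw [← assoc_eq a b c x y h1 hy, h2]

/-- Associativity, existence transferred right-to-left. -/
lemma assoc_ex2 {a b c y w : E} (h1 : padd b c = some y) (h2 : padd a y = some w) :
    ∃ x, padd a b = some x ∧ padd x c = some w := by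
  obtain ⟨x, hx, -⟩ := (assoc_defined a b c).2 ⟨y, h1, by rw [h2]; rfl⟩
  refine ⟨x, hx, ?_⟩
  rw [assoc_eq a b c x y hx h1, h2]

lemma padd_zero (a : E) : padd a pzero = some a := by
  obtain ⟨e, he, -⟩ := exists_unique_left a
  obtain ⟨y, hy, hey⟩ := assoc_ex1 he one_padd_zero
  obtain ⟨d, -, hu⟩ := exists_unique_right e
  have hya : y = a := (hu y hey).trans (hu a he).symm
  rwa [hya] at hy

lemma zero_padd (a : E) : padd pzero a = some a := by
  obtain ⟨d, hd, -⟩ := exists_unique_right a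
  obtain ⟨x, hx, hxd⟩ := assoc_ex2 hd zero_padd_one
  obtain ⟨e, -, hu⟩ := exists_unique_left d
  have hxa : x = a := (hu x hxd).trans (hu a hd).symm
  rwa [hxa] at hx

lemma cancel_left {a b c v : E} (h1 : padd a b = some v) (h2 : padd a c = some v) :
    b = c := by
  obtain ⟨e, he, -⟩ := exists_unique_left v
  obtain ⟨x, hx, hxb⟩ := assoc_ex2 h1 he
  obtain ⟨x', hx', hxc⟩ := assoc_ex2 h2 he
  have : x' = x := by rw [hx] at hx'; exact (Option.some.inj hx').symm
  rw [this] at hxc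
  obtain ⟨d, -, hu⟩ := exists_unique_right x
  rw [hu b hxb, hu c hxc]

lemma cancel_right {a b c v : E} (h1 : padd b a = some v) (h2 : padd c a = some v) :
    b = c := by
  obtain ⟨d, hd, -⟩ := exists_unique_right v
  obtain ⟨y, hy, hby⟩ := assoc_ex1 h1 hd
  obtain ⟨y', hy', hcy⟩ := assoc_ex1 h2 hd
  have : y' = y := by rw [hy] at hy'; exact (Option.some.inj hy').symm
  rw [this] at hcy
  obtain ⟨e, -, hu⟩ := exists_unique_left y
  rw [hu b hby, hu c hcy]

lemma eq_zero_of_padd_eq_zero {a b : E} (h : padd a b = some pzero) :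
    a = pzero ∧ b = pzero := by
  obtain ⟨y, hy, -⟩ := (assoc_defined a b pone).1
    ⟨pzero, h, by rw [zero_padd_one]; rfl⟩
  have hb : b = pzero := add_one b (by rw [hy]; rfl)
  refine ⟨?_, hb⟩
  rw [hb] at h
  exact Option.some.inj ((padd_zero a).symm.trans h)

lemma pLe_refl (a : E) : pLe a a := ⟨pzero, padd_zero a⟩

lemma zero_pLe (a : E) : pLe pzero a := ⟨a, zero_padd a⟩

lemma pLe_of_left {a b c : E} (h : padd c a = some b) : pLe a b := by
  obtain ⟨d, e, -, he⟩ := shift c a b h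
  exact ⟨e, he⟩

lemma pLe_left {a b : E} (h : pLe a b) : ∃ c, padd c a = some b := by
  obtain ⟨c, hc⟩ := h
  obtain ⟨d, e, hd, -⟩ := shift a c b hc
  exact ⟨d, hd⟩

lemma pLe_trans {a b c : E} (h1 : pLe a b) (h2 : pLe b c) : pLe a c := by
  obtain ⟨u, hu⟩ := h1
  obtain ⟨v, hv⟩ := h2
  obtain ⟨y, -, hy⟩ := assoc_ex1 hu hv
  exact ⟨y, hy⟩

lemma pLe_antisymm {a b : E} (h1 : pLe a b) (h2 : pLe b a) : a = b := by
  obtain ⟨c, hc⟩ := h1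
  obtain ⟨d, hd⟩ := h2
  obtain ⟨y, hy, hay⟩ := assoc_ex1 hc hd
  have hy0 : y = pzero := cancel_left hay (padd_zero a)
  rw [hy0] at hy
  have := (eq_zero_of_padd_eq_zero hy).1
  rw [this] at hc
  exact Option.some.inj ((padd_zero a).symm.trans hc)

/-- If `x ≤ a`, `y ≤ b` and `a + b = c`, then `x + y` exists and `x + y ≤ c`. -/
lemma padd_le {x a y b c : E} (hx : pLe x a) (hy : pLe y b)
    (hc : padd a b = some c) : ∃ z, padd x y = some z ∧ pLe z c := by
  obtain ⟨u, hu⟩ := hx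
  obtain ⟨w, hw1, hw2⟩ := assoc_ex1 hu hc
  obtain ⟨d, e, -, he⟩ := shift u b w hw1
  obtain ⟨t, ht⟩ := hy
  obtain ⟨s, -, hs⟩ := assoc_ex1 ht he
  obtain ⟨z, hz1, hz2⟩ := assoc_ex2 hs hw2
  exact ⟨z, hz1, ⟨s, hz2⟩⟩

/-- σ-(RDP) implies (RDP). -/
lemma rdp_of_sigmaRDP (h : SigmaRDP E) : RDP E := by
  intro a₁ a₂ b₁ b₂ c h1 h2
  set bseq : ℕ → E := fun n => if n = 0 then b₁ else if n = 1 then b₂ else pzero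
    with hbseq
  have hsum : HasSumE bseq c := by
    refine ⟨fun n => if n = 0 then b₁ else c, by simp [hbseq], ?_, ?_, ?_⟩
    · intro n
      match n with
      | 0 => simpa [hbseq] using h2
      | Nat.succ k => simpa [hbseq] using padd_zero c
    · rintro x ⟨n, rfl⟩
      match n with
      | 0 => exact ⟨b₂, by simpa using h2⟩
      | Nat.succ k => simpa using pLe_refl c
    · intro d hd
      have := hd c ⟨1, by simp⟩
      simpa using this
  obtain ⟨c₁, c₂, hc1, hc2, hn⟩ := h a₁ a₂ c bseq h1 hsum
  have hzero : ∀ i ≥ 2, c₁ i = pzero ∧ c₂ i = pzero := by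
    intro i hi
    have hb : bseq i = pzero := by
      have h0 : i ≠ 0 := by omega
      have h1' : i ≠ 1 := by omega
      simp [hbseq, h0, h1']
    have := hn i
    rw [hb] at this
    exact eq_zero_of_padd_eq_zero this
  have key : ∀ (cc : ℕ → E) (aa : E), HasSumE cc aa → (∀ i ≥ 2, cc i = pzero) →
      padd (cc 0) (cc 1) = some aa := by
    intro cc aa ⟨p, hp0, hps, hub, hleast⟩ hz
    have hstab : ∀ k, p (k + 1) = p 1 := by
      intro k
      induction k with
      | zero => rfl
      | succ j ih =>
        have h1 : padd (p (j + 1)) (cc (j + 2)) = some (p (j + 2)) := hps (j + 1)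
        rw [hz (j + 2) (by omega)] at h1
        have e : p (j + 1) = p (j + 2) :=
          Option.some.inj ((padd_zero (p (j + 1))).symm.trans h1)
        show p (j + 2) = p 1
        rw [← e, ih]
    have hub1 : ∀ x ∈ Set.range p, pLe x (p 1) := by
      rintro x ⟨n, rfl⟩
      match n with
      | 0 => exact ⟨cc 1, hps 0⟩
      | Nat.succ k => rw [hstab k]; exact pLe_refl _
    have h1 : pLe aa (p 1) := hleast _ hub1
    have h2 : pLe (p 1) aa := hub _ ⟨1, rfl⟩
    have : p 1 = aa := pLe_antisymm h2 h1
    rw [← this, ← hp0]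
    exact hps 0
  have e1 := key c₁ a₁ hc1 (fun i hi => (hzero i hi).1)
  have e2 := key c₂ a₂ hc2 (fun i hi => (hzero i hi).2)
  refine ⟨c₁ 0, c₁ 1, c₂ 0, c₂ 1, e1, e2, ?_, ?_⟩
  · simpa [hbseq] using hn 0
  · simpa [hbseq] using hn 1

/-! ### Measure lemmas -/

lemma signed_of_jordan {m : E → ℝ} (hm : IsJordan m) : IsSignedMeasure m := by
  obtain ⟨m₁, m₂, h₁, h₂, rfl⟩ := hm
  intro a b c h
  simp only [Pi.sub_apply, h₁.1 a b c h, h₂.1 a b c h]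
  ring

lemma signed_zero {m : E → ℝ} (hm : IsSignedMeasure m) : m pzero = 0 := by
  have := hm pzero pzero pzero (padd_zero pzero)
  linarith

lemma measure_mono {m : E → ℝ} (hm : IsMeasure m) {a b : E} (h : pLe a b) :
    m a ≤ m b := by
  obtain ⟨c, hc⟩ := h
  have := hm.1 a c b hc
  have := hm.2 c
  linarith

/-- The canonical candidate for `m ⋁ 0`. -/
noncomputable def MS (m : E → ℝ) (a : E) : ℝ := sSup (m '' {x | pLe x a})

lemma MS_set_nonempty (m : E → ℝ) (a : E) : (m '' {x | pLe x a}).Nonempty :=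
  ⟨m pzero, pzero, zero_pLe a, rfl⟩

lemma MS_set_bddAbove {m : E → ℝ} (hm : IsJordan m) (a : E) :
    BddAbove (m '' {x | pLe x a}) := by
  obtain ⟨m₁, m₂, h₁, h₂, rfl⟩ := hm
  refine ⟨m₁ a, ?_⟩
  rintro r ⟨x, hx, rfl⟩
  have h1 : m₁ x ≤ m₁ a := measure_mono h₁ hx
  have h2 : 0 ≤ m₂ x := h₂.2 x
  simp only [Pi.sub_apply]
  linarith

lemma le_MS {m : E → ℝ} (hm : IsJordan m) {x a : E} (h : pLe x a) :
    m x ≤ MS m a :=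
  le_csSup (MS_set_bddAbove hm a) ⟨x, h, rfl⟩

lemma MS_le {m : E → ℝ} {a : E} {r : ℝ} (h : ∀ x, pLe x a → m x ≤ r) :
    MS m a ≤ r := by
  refine csSup_le (MS_set_nonempty m a) ?_
  rintro s ⟨x, hx, rfl⟩
  exact h x hx

lemma MS_nonneg {m : E → ℝ} (hm : IsJordan m) (a : E) : 0 ≤ MS m a := by
  have := le_MS hm (zero_pLe a)
  rwa [signed_zero (signed_of_jordan hm)] at this

lemma self_le_MS {m : E → ℝ} (hm : IsJordan m) (a : E) : m a ≤ MS m a :=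
  le_MS hm (pLe_refl a)

lemma MS_mono {m : E → ℝ} (hm : IsJordan m) {a b : E} (h : pLe a b) :
    MS m a ≤ MS m b :=
  MS_le fun x hx => le_MS hm (pLe_trans hx h)

lemma MS_additive {m : E → ℝ} (hm : IsJordan m) (hrdp : RDP E) :
    IsSignedMeasure (fun a => MS m a) := by
  have hsm := signed_of_jordan hm
  intro a b c hc
  have hle : MS m c ≤ MS m a + MS m b := by
    refine MS_le fun z hz => ?_
    obtain ⟨t, ht⟩ := hz
    obtain ⟨d₁, d₂, d₃, d₄, e₁, e₂, e₃, e₄⟩ := hrdp z t a b c ht hc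
    have h1 : m z = m d₁ + m d₂ := hsm d₁ d₂ z e₁
    have h2 : m d₁ ≤ MS m a := le_MS hm ⟨d₃, e₃⟩
    have h3 : m d₂ ≤ MS m b := le_MS hm ⟨d₄, e₄⟩
    linarith
  have hge : MS m a + MS m b ≤ MS m c := by
    have : MS m a ≤ MS m c - MS m b := by
      refine MS_le fun x hx => ?_
      have : MS m b ≤ MS m c - m x := by
        refine MS_le fun y hy => ?_
        obtain ⟨z, hz1, hz2⟩ := padd_le hx hy hc
        have := hsm x y z hz1
        have := le_MS hm hz2
        linarith
      linarith
    linarith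
  linarith

lemma isMeasure_MS {m : E → ℝ} (hm : IsJordan m) (hrdp : RDP E) :
    IsMeasure (fun a => MS m a) :=
  ⟨MS_additive hm hrdp, MS_nonneg hm⟩

lemma isMeasure_add {f g : E → ℝ} (hf : IsMeasure f) (hg : IsMeasure g) :
    IsMeasure (fun a => f a + g a) := by
  refine ⟨fun a b c h => ?_, fun a => ?_⟩
  · have := hf.1 a b c h; have := hg.1 a b c h; dsimp only; linarith
  · have := hf.2 a; have := hg.2 a; dsimp only; linarith

/-- `mp` equals the canonical sup `MS m`. -/
lemma sup_eq_MS {m mp : E → ℝ} (hm : IsJordan m) (hrdp : RDP E)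
    (hp : IsSupIn {m, 0} mp) : mp = fun a => MS m a := by
  obtain ⟨hpj, hub, hleast⟩ := hp
  have hm1 : IsMeasure (mp - m) := hub m (Set.mem_insert _ _)
  have hm0 : IsMeasure (mp - 0) := hub 0 (Set.mem_insert_of_mem _ rfl)
  have hmp_meas : IsMeasure mp := by
    refine ⟨fun a b c h => ?_, fun a => ?_⟩
    · have := hm0.1 a b c h; simpa using this
    · have := hm0.2 a; simpa using this
  have h1 : ∀ a, MS m a ≤ mp a := by
    intro a
    refine MS_le fun x hx => ?_
    obtain ⟨u, hu⟩ := hx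
    have e1 : mp a = mp x + mp u := hmp_meas.1 x u a hu
    have e2 : 0 ≤ mp x - m x := by have := hm1.2 x; simpa using this
    have e3 : 0 ≤ mp u := hmp_meas.2 u
    linarith
  have h2 : ∀ a, mp a ≤ MS m a := by
    have hJ : IsJordan (fun a => MS m a) :=
      ⟨fun a => MS m a, 0, isMeasure_MS hm hrdp,
        ⟨fun a b c h => by simp, fun a => le_refl 0⟩, by funext a; simp⟩
    have hub' : ∀ t ∈ ({m, 0} : Set (E → ℝ)), MLe t (fun a => MS m a) := by
      rintro t (rfl | rfl)
      · refine ⟨fun a b c h => ?_, fun a => ?_⟩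
        · have := (MS_additive hm hrdp) a b c h
          have := signed_of_jordan hm a b c h
          simp only [Pi.sub_apply]; linarith
        · have := self_le_MS hm a; simp only [Pi.sub_apply]; linarith
      · refine ⟨fun a b c h => ?_, fun a => ?_⟩
        · have := (MS_additive hm hrdp) a b c h
          simp only [Pi.sub_apply, Pi.zero_apply]; linarith
        · have := MS_nonneg hm a; simp only [Pi.sub_apply, Pi.zero_apply]; linarith
    have := hleast _ hJ hub'
    intro a
    have := this.2 a
    simp only [Pi.sub_apply] at this
    linarith
  funext a
  exact le_antisymm (h2 a) (h1 a)

/-- `mi` equals `m - MS m`. -/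
lemma inf_eq {m mp mi : E → ℝ} (hm : IsJordan m) (hrdp : RDP E)
    (hp : IsSupIn {m, 0} mp) (hi : IsInfIn {m, 0} mi) :
    mi = fun a => m a - MS m a := by
  have hmpeq := sup_eq_MS hm hrdp hp
  obtain ⟨m₁, m₂, hm₁, hm₂, hmeq⟩ := hm
  obtain ⟨hij, hlb, hgreatest⟩ := hi
  obtain ⟨hpj, hub, hpleast⟩ := hp
  have hsm := signed_of_jordan ⟨m₁, m₂, hm₁, hm₂, hmeq⟩
  set f : E → ℝ := fun a => m a - MS m a with hf
  -- f ≤ mi :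
  have hfJ : IsJordan f := by
    refine ⟨m₁, fun a => m₂ a + MS m a, hm₁,
      isMeasure_add hm₂ (isMeasure_MS ⟨m₁, m₂, hm₁, hm₂, hmeq⟩ hrdp), ?_⟩
    funext a
    have : m a = m₁ a - m₂ a := by rw [hmeq]; rfl
    simp only [hf, Pi.sub_apply]
    linarith
  have hflb : ∀ t ∈ ({m, 0} : Set (E → ℝ)), MLe f t := by
    have hMSm : IsSignedMeasure (fun a => MS m a) :=
      MS_additive ⟨m₁, m₂, hm₁, hm₂, hmeq⟩ hrdp
    rintro t (rfl | rfl)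
    · refine ⟨fun a b c h => ?_, fun a => ?_⟩
      · have := hMSm a b c h
        simp only [Pi.sub_apply, hf]; linarith
      · have := MS_nonneg ⟨m₁, m₂, hm₁, hm₂, hmeq⟩ a
        simp only [Pi.sub_apply, hf]; linarith
    · refine ⟨fun a b c h => ?_, fun a => ?_⟩
      · have h1 := hMSm a b c h
        have h2 := hsm a b c h
        simp only [Pi.sub_apply, Pi.zero_apply, hf]; linarith
      · have := self_le_MS ⟨m₁, m₂, hm₁, hm₂, hmeq⟩ a
        simp only [Pi.sub_apply, Pi.zero_apply, hf]; linarith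
  have hf_le_mi : ∀ a, f a ≤ mi a := by
    have := hgreatest f hfJ hflb
    intro a
    have := this.2 a
    simp only [Pi.sub_apply] at this
    linarith
  -- mi ≤ f :
  have hmi_le_f : ∀ a, mi a ≤ f a := by
    obtain ⟨n₁, n₂, hn₁, hn₂, hnieq⟩ := hij
    have hgJ : IsJordan (fun a => m a - mi a) := by
      refine ⟨fun a => m₁ a + n₂ a, fun a => m₂ a + n₁ a,
        isMeasure_add hm₁ hn₂, isMeasure_add hm₂ hn₁, ?_⟩
      funext a
      have e1 : m a = m₁ a - m₂ a := by rw [hmeq]; rfl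
      have e2 : mi a = n₁ a - n₂ a := by rw [hnieq]; rfl
      simp only [Pi.sub_apply]
      linarith
    have hmi_m : IsMeasure (m - mi) := hlb m (Set.mem_insert _ _)
    have hmi_0 : IsMeasure ((0 : E → ℝ) - mi) := hlb 0 (Set.mem_insert_of_mem _ rfl)
    have hgub : ∀ t ∈ ({m, 0} : Set (E → ℝ)), MLe t (fun a => m a - mi a) := by
      rintro t (rfl | rfl)
      · refine ⟨fun a b c h => ?_, fun a => ?_⟩
        · have h1 := hmi_0.1 a b c h
          simp only [Pi.sub_apply, Pi.zero_apply] at h1 ⊢; linarith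
        · have h1 := hmi_0.2 a
          simp only [Pi.sub_apply, Pi.zero_apply] at h1 ⊢; linarith
      · refine ⟨fun a b c h => ?_, fun a => ?_⟩
        · have h1 := hmi_m.1 a b c h
          have h2 := hsm a b c h
          simp only [Pi.sub_apply, Pi.zero_apply] at h1 ⊢; linarith
        · have h1 := hmi_m.2 a
          simp only [Pi.sub_apply, Pi.zero_apply] at h1 ⊢; linarith
    have := hpleast _ hgJ hgub
    intro a
    have h1 := this.2 a
    have h2 : mp a = MS m a := by rw [hmpeq]
    simp only [Pi.sub_apply] at h1
    simp only [hf]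
    linarith
  funext a
  exact le_antisymm (hmi_le_f a) (hf_le_mi a)

/-- The key lemma: `MS m` is σ-additive. -/
lemma MS_sigmaAdditive {m : E → ℝ} (hσRDP : SigmaRDP E) (hm : IsJordan m)
    (hσ : SigmaAdditive m) : SigmaAdditive (fun a => MS m a) := by
  have hrdp := rdp_of_sigmaRDP hσRDP
  intro a b hmono hlub
  have hle : ∀ i j, i ≤ j → pLe (a i) (a j) := by
    intro i j hij
    induction j with
    | zero => have : i = 0 := Nat.le_zero.mp hij; rw [this]; exact pLe_refl _
    | succ k ih =>
      rcases Nat.lt_or_ge i (k + 1) with h | h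
      · exact pLe_trans (ih (Nat.lt_succ_iff.mp h)) (hmono k)
      · have : i = k + 1 := le_antisymm hij h
        rw [this]; exact pLe_refl _
  have hmono' : Monotone fun n => MS m (a n) := fun i j hij => MS_mono hm (hle i j hij)
  have hbdd : BddAbove (Set.range fun n => MS m (a n)) := by
    refine ⟨MS m b, ?_⟩
    rintro r ⟨n, rfl⟩
    exact MS_mono hm (hlub.1 (a n) ⟨n, rfl⟩)
  have htend : Filter.Tendsto (fun n => MS m (a n)) Filter.atTop
      (nhds (⨆ n, MS m (a n))) := tendsto_atTop_ciSup hmono' hbdd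
  have heq : MS m b = ⨆ n, MS m (a n) := by
    refine le_antisymm ?_ ?_
    · -- MS m b ≤ ⨆
      refine MS_le fun x hx => ?_
      obtain ⟨y, hxy⟩ := hx
      -- difference sequence of a
      choose u hu using hmono
      set d : ℕ → E := fun n => match n with | 0 => a 0 | Nat.succ k => u k with hd
      have hsum : HasSumE d b := ⟨a, rfl, fun n => hu n, hlub⟩
      obtain ⟨c₁, c₂, hc1, hc2, hn⟩ := hσRDP x y b d hxy hsum
      obtain ⟨p, hp0, hps, hplub⟩ := hc1
      have hpa : ∀ n, pLe (p n) (a n) := by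
        intro n
        induction n with
        | zero =>
          rw [hp0]
          exact ⟨c₂ 0, hn 0⟩
        | succ k ih =>
          obtain ⟨z, hz1, hz2⟩ := padd_le ih ⟨c₂ (k + 1), hn (k + 1)⟩ (hu k)
          have : z = p (k + 1) := Option.some.inj ((hz1.symm).trans (hps k))
          rwa [this] at hz2
      have hmx : Filter.Tendsto (fun n => m (p n)) Filter.atTop (nhds (m x)) :=
        hσ p x (fun n => ⟨c₁ (n + 1), hps n⟩) hplub
      refine le_of_tendsto hmx (Filter.Eventually.of_forall fun n => ?_)
      calc m (p n) ≤ MS m (p n) := self_le_MS hm (p n)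
        _ ≤ MS m (a n) := MS_mono hm (hpa n)
        _ ≤ ⨆ n, MS m (a n) := le_ciSup hbdd n
    · exact ciSup_le fun n => MS_mono hm (hlub.1 (a n) ⟨n, rfl⟩)
  show Filter.Tendsto _ _ (nhds (MS m b))
  rw [heq]
  exact htend

end Aux

/-- Proposition 4.7: on a pseudo effect algebra with σ-(RDP), if
`m` is a σ-additive Jordan signed measure, then `m⁺`, `m⁻` and `|m|` are σ-additive. -/
theorem stmt13 (hσRDP : SigmaRDP E) (m : E → ℝ) (hm : IsJordan m)
    (hσ : SigmaAdditive m)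
    (mp mi : E → ℝ)
    (hp : IsSupIn {m, 0} mp)    -- `mp = m⁺ = m ⋁ 0`
    (hi : IsInfIn {m, 0} mi) :  -- `-mi = m⁻ = -(m ⋀ 0)`
    SigmaAdditive mp ∧ SigmaAdditive (fun x => -(mi x)) ∧
      SigmaAdditive (fun x => mp x + -(mi x)) := by
  have hrdp := rdp_of_sigmaRDP hσRDP
  have hmpeq : mp = fun a => MS m a := sup_eq_MS hm hrdp hp
  have hmieq : mi = fun a => m a - MS m a := inf_eq hm hrdp hp hi
  have hMSσ := MS_sigmaAdditive hσRDP hm hσ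
  refine ⟨?_, ?_, ?_⟩
  · rw [hmpeq]; exact hMSσ
  · intro a b hmono hlub
    have h1 := hMSσ a b hmono hlub
    have h2 := hσ a b hmono hlub
    simp only [hmieq, neg_sub]
    exact h1.sub h2
  · intro a b hmono hlub
    have h1 := hMSσ a b hmono hlub
    have h2 := hσ a b hmono hlub
    simp only [hmpeq, hmieq, neg_sub]
    exact h1.add (h1.sub h2)

end PseudoEffectAlgebra
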